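/- Let σ_0 > 0, n ≥ 3, ε > 0, and Σ_k² = σ_0² U_1 ⋯ U_k with U_i i.i.d. χ²_{n-1}/(n-1). Then Pr(⋃_{k≥m} {Σ_k > ε}) ≤ (σ_0/ε) · exp(-m/(4n-1)) / (1 - exp(-1/(4n-1))), and consequently Σ_k → 0 almost surely. -/

import Mathlib

set_option maxHeartbeats 1000000

open MeasureTheory ProbabilityTheory Filter
open scoped ENNReal NNReal

namespace GRCaux
open Real

noncomputable def gc (x : ℝ) : ℝ := Gamma (x + 1/2) / Gamma x

lemma gc_pos {x : ℝ} (hx : 0 < x) : 0 < gc x :=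
  div_pos (Gamma_pos_of_pos (by linarith)) (Gamma_pos_of_pos hx)

lemma gc_mul {x : ℝ} (hx : 0 < x) : gc x * gc (x + 1/2) = x := by
  unfold gc
  have h1 : Gamma x ≠ 0 := (Gamma_pos_of_pos hx).ne'
  have h2 : Gamma (x + 1/2) ≠ 0 := (Gamma_pos_of_pos (by linarith)).ne'
  have h3 : x + 1/2 + 1/2 = x + 1 := by ring
  rw [h3, Gamma_add_one hx.ne']
  field_simp

lemma gc_le_gc {x : ℝ} (hx : 0 < x) : gc x ≤ gc (x + 1/2) := by
  have hx2 : (0:ℝ) < x + 1/2 := by linarith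
  have hx1 : (0:ℝ) < x + 1 := by linarith
  have hconv := convexOn_log_Gamma.2 (Set.mem_Ioi.mpr hx) (Set.mem_Ioi.mpr hx1)
      (by norm_num : (0:ℝ) ≤ 1/2) (by norm_num : (0:ℝ) ≤ 1/2) (by norm_num)
  have hmid : (1/2 : ℝ) • x + (1/2 : ℝ) • (x+1) = x + 1/2 := by
    simp only [smul_eq_mul]; ring
  rw [hmid] at hconv
  simp only [Function.comp_apply, smul_eq_mul] at hconv
  have h4 := Real.exp_le_exp.mpr hconv
  rw [Real.exp_log (Gamma_pos_of_pos hx2)] at h4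
  have h5 : Real.exp (1/2 * Real.log (Gamma x) + 1/2 * Real.log (Gamma (x+1))) ^ 2
      = Gamma x * Gamma (x+1) := by
    rw [← Real.exp_nat_mul]
    push_cast
    rw [show (2:ℝ) * (1/2 * Real.log (Gamma x) + 1/2 * Real.log (Gamma (x+1)))
        = Real.log (Gamma x) + Real.log (Gamma (x+1)) by ring, Real.exp_add,
      Real.exp_log (Gamma_pos_of_pos hx), Real.exp_log (Gamma_pos_of_pos hx1)]
  have key : Gamma (x+1/2) ^ 2 ≤ Gamma x * Gamma (x+1) := by
    rw [← h5]
    have := Gamma_pos_of_pos hx2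
    nlinarith [Real.exp_pos (1/2 * Real.log (Gamma x) + 1/2 * Real.log (Gamma (x+1)))]
  unfold gc
  rw [show x + 1/2 + 1/2 = x + 1 by ring, div_le_div_iff₀ (Gamma_pos_of_pos hx)
    (Gamma_pos_of_pos hx2)]
  nlinarith [key]

lemma gc_succ {x : ℝ} (hx : 0 < x) : gc (x+1) = gc x * ((x + 1/2)/x) := by
  unfold gc
  have h2 : (0:ℝ) < x + 1/2 := by linarith
  rw [show x + 1 + 1/2 = (x + 1/2) + 1 by ring, Gamma_add_one h2.ne', Gamma_add_one hx.ne']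
  have h1 : Gamma x ≠ 0 := (Gamma_pos_of_pos hx).ne'
  field_simp

lemma exp_le_inv_one_sub {t : ℝ} (h1 : t < 1) : Real.exp t ≤ 1/(1-t) := by
  have h3 : Real.exp (-t) * Real.exp t = 1 := by rw [← Real.exp_add]; simp
  have h2 := Real.add_one_le_exp (-t)
  rw [le_div_iff₀ (by linarith : (0:ℝ) < 1 - t)]
  nlinarith [Real.exp_pos t]

noncomputable def ga (x : ℝ) : ℝ := gc x ^ 2 / x * Real.exp (2/(8*x+3))

lemma ga_pos {x : ℝ} (hx : 0 < x) : 0 < ga x := by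
  unfold ga
  have := gc_pos hx
  positivity

lemma ga_step {x : ℝ} (hx : 1 ≤ x) : ga x ≤ ga (x+1) := by
  have hx0 : (0:ℝ) < x := by linarith
  have hd1 : (0:ℝ) < 8*x+3 := by linarith
  have hd2 : (0:ℝ) < 8*(x+1)+3 := by linarith
  have hG := gc_pos hx0
  have hs : (0:ℝ) < (2*x+1)^2 := by positivity
  have hsub : 2/(8*x+3) - 2/(8*(x+1)+3) ≤ 1/(2*x+1)^2 := by
    rw [div_sub_div _ _ hd1.ne' hd2.ne', div_le_div_iff₀ (by positivity) hs]
    nlinarith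
  have hslt : 1/(2*x+1)^2 < 1 := by
    rw [div_lt_one hs]; nlinarith
  have hexp : Real.exp (2/(8*x+3) - 2/(8*(x+1)+3)) ≤ (x+1/2)^2/(x*(x+1)) := by
    calc Real.exp (2/(8*x+3) - 2/(8*(x+1)+3)) ≤ Real.exp (1/(2*x+1)^2) :=
          Real.exp_le_exp.mpr hsub
      _ ≤ 1/(1 - 1/(2*x+1)^2) := exp_le_inv_one_sub hslt
      _ = (x+1/2)^2/(x*(x+1)) := by
          have h2x : (0:ℝ) < 2*x+1 := by linarith
          have hxx : (0:ℝ) < x*(x+1) := by nlinarith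
          rw [show 1 - 1/(2*x+1)^2 = (4*(x*(x+1)))/((2*x+1)^2) by
            field_simp; ring, one_div_div, div_eq_div_iff (by positivity) hxx.ne']
          ring
  unfold ga
  rw [gc_succ hx0, mul_pow]
  have hkey : Real.exp (2/(8*x+3))
      ≤ ((x+1/2)/x)^2 / (x+1) * x * Real.exp (2/(8*(x+1)+3)) := by
    have := Real.exp_pos (2/(8*(x+1)+3))
    have heq : Real.exp (2/(8*x+3))
        = Real.exp (2/(8*x+3) - 2/(8*(x+1)+3)) * Real.exp (2/(8*(x+1)+3)) := by
      rw [← Real.exp_add]; ring_nf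
    rw [heq]
    have h2 : ((x+1/2)/x)^2 / (x+1) * x = (x+1/2)^2/(x*(x+1)) := by
      field_simp
    rw [h2]
    exact mul_le_mul_of_nonneg_right hexp this.le
  have hgx2 : (0:ℝ) < gc x ^ 2 := by positivity
  calc gc x ^ 2 / x * Real.exp (2/(8*x+3))
      ≤ gc x ^ 2 / x * (((x+1/2)/x)^2 / (x+1) * x * Real.exp (2/(8*(x+1)+3))) := by
        apply mul_le_mul_of_nonneg_left hkey (by positivity)
    _ = gc x ^ 2 * ((x+1/2)/x)^2 / (x+1) * Real.exp (2/(8*(x+1)+3)) := by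
        field_simp

lemma ga_pair {x : ℝ} (hx : 1 ≤ x) : ga x * ga (x+1/2) ≤ 1 := by
  have hx0 : (0:ℝ) < x := by linarith
  have hd1 : (0:ℝ) < 8*x+3 := by linarith
  have hd3 : (0:ℝ) < 8*(x+1/2)+3 := by linarith
  have hsum : 2/(8*x+3) + 2/(8*(x+1/2)+3) ≤ 1/(2*x+1) := by
    rw [div_add_div _ _ hd1.ne' hd3.ne', div_le_div_iff₀ (by positivity) (by linarith)]
    nlinarith
  have hexp : Real.exp (2/(8*x+3) + 2/(8*(x+1/2)+3)) ≤ (x+1/2)/x := by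
    calc Real.exp (2/(8*x+3) + 2/(8*(x+1/2)+3)) ≤ Real.exp (1/(2*x+1)) :=
          Real.exp_le_exp.mpr hsum
      _ ≤ 1/(1 - 1/(2*x+1)) := exp_le_inv_one_sub (by rw [div_lt_one (by linarith)]; linarith)
      _ = (x+1/2)/x := by
          have h2x : (0:ℝ) < 2*x+1 := by linarith
          rw [show 1 - 1/(2*x+1) = (2*x)/(2*x+1) by field_simp; ring, one_div_div,
            div_eq_div_iff (by linarith : (0:ℝ) < 2*x).ne' hx0.ne']
          ring
  have heq : ga x * ga (x+1/2)
      = (gc x * gc (x+1/2))^2/(x*(x+1/2)) * Real.exp (2/(8*x+3) + 2/(8*(x+1/2)+3)) := by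
    have hne1 : x ≠ 0 := hx0.ne'
    have hne2 : x + 1/2 ≠ 0 := by positivity
    unfold ga
    rw [Real.exp_add]
    field_simp
  rw [heq, gc_mul hx0,
    show x^2/(x*(x+1/2)) = x/(x+1/2) by
      rw [div_eq_div_iff (by nlinarith : (0:ℝ) < x*(x+1/2)).ne' (by linarith : (0:ℝ) < x+1/2).ne']
      ring]
  rw [div_mul_eq_mul_div, div_le_one (by linarith)]
  calc x * Real.exp (2/(8*x+3) + 2/(8*(x+1/2)+3)) ≤ x * ((x+1/2)/x) :=
        mul_le_mul_of_nonneg_left hexp hx0.le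
    _ = x + 1/2 := by field_simp

lemma ga_lb {x : ℝ} (hx : 1 ≤ x) : (x - 1/2)/x ≤ ga x := by
  have hx0 : (0:ℝ) < x := by linarith
  have hy : (0:ℝ) < x - 1/2 := by linarith
  have h1 : gc (x - 1/2) * gc x = x - 1/2 := by
    have := gc_mul hy
    rwa [show x - 1/2 + 1/2 = x by ring] at this
  have h2 : gc (x - 1/2) ≤ gc x := by
    have := gc_le_gc hy
    rwa [show x - 1/2 + 1/2 = x by ring] at this
  have h3 : x - 1/2 ≤ gc x ^ 2 := by
    nlinarith [gc_pos hy, gc_pos hx0]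
  have h4 : (1:ℝ) ≤ Real.exp (2/(8*x+3)) := by
    rw [Real.one_le_exp_iff]; positivity
  unfold ga
  calc (x - 1/2)/x ≤ gc x ^ 2 / x := by
        gcongr
    _ ≤ gc x ^ 2 / x * Real.exp (2/(8*x+3)) := by
        nlinarith [gc_pos hx0, div_pos (pow_pos (gc_pos hx0) 2) hx0]


lemma ga_def (x : ℝ) : ga x = gc x ^ 2 / x * Real.exp (2/(8*x+3)) := rfl
lemma gc_def (x : ℝ) : gc x = Gamma (x + 1/2) / Gamma x := rfl

lemma ga_mono_nat {x : ℝ} (hx : 1 ≤ x) : ∀ j : ℕ, ga x ≤ ga (x + j) := by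
  intro j
  induction j with
  | zero => simp
  | succ j ih =>
    have h1 : (1:ℝ) ≤ x + j := by
      have : (0:ℝ) ≤ j := Nat.cast_nonneg j
      linarith
    calc ga x ≤ ga (x + j) := ih
      _ ≤ ga (x + j + 1) := ga_step h1
      _ = ga (x + (j+1:ℕ)) := by push_cast; ring_nf

lemma ga_le_one {x : ℝ} (hx : 1 ≤ x) : ga x ≤ 1 := by
  have key : ∀ j : ℕ, ga x * (x + j) ≤ x + j + 1/2 := by
    intro j
    have hxj : (1:ℝ) ≤ x + j := by
      have : (0:ℝ) ≤ j := Nat.cast_nonneg j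
      linarith
    have h1 : ga (x+j) * ga (x+j+1/2) ≤ 1 := ga_pair hxj
    have h2 : (x+j)/(x+j+1/2) ≤ ga (x+j+1/2) := by
      have := ga_lb (x := x+j+1/2) (by linarith)
      rwa [show x+j+1/2 - 1/2 = x+j by ring] at this
    have h3 : (0:ℝ) < (x+j)/(x+j+1/2) := by
      apply div_pos <;> linarith
    have h4 : ga (x+j) * ((x+j)/(x+j+1/2)) ≤ 1 := by
      calc ga (x+j) * ((x+j)/(x+j+1/2)) ≤ ga (x+j) * ga (x+j+1/2) :=
            mul_le_mul_of_nonneg_left h2 (ga_pos (by linarith)).le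
        _ ≤ 1 := h1
      -- done
    have h5 : ga (x+j) * (x+j) ≤ x+j+1/2 := by
      rw [mul_div_assoc'] at h4
      rw [div_le_one (by linarith)] at h4
      linarith
    have h6 : ga x ≤ ga (x+j) := ga_mono_nat hx j
    calc ga x * (x+j) ≤ ga (x+j) * (x+j) :=
          mul_le_mul_of_nonneg_right h6 (by linarith)
      _ ≤ x+j+1/2 := h5
  by_contra hcon
  push_neg at hcon
  obtain ⟨j, hj⟩ := exists_nat_gt ((1/2)/(ga x - 1))
  have hk := key j
  have hd : (0:ℝ) < ga x - 1 := by linarith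
  have : (1/2) < (ga x - 1) * j := by
    rw [div_lt_iff₀ hd] at hj
    linarith [mul_comm (ga x - 1) (j:ℝ)]
  nlinarith [Nat.cast_nonneg (α := ℝ) j]

lemma gamma_ratio_le {x : ℝ} (hx : 1 ≤ x) :
    Gamma (x + 1/2) / (Gamma x * Real.sqrt x) ≤ Real.exp (-(1/(8*x+3))) := by
  have hx0 : (0:ℝ) < x := by linarith
  have hd : (0:ℝ) < 8*x+3 := by linarith
  have h1 : gc x ^ 2 ≤ x * Real.exp (-(2/(8*x+3))) := by
    have h := ga_le_one hx
    rw [ga_def] at h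
    have hexp : (0:ℝ) < Real.exp (2/(8*x+3)) := Real.exp_pos _
    rw [div_mul_eq_mul_div, div_le_one hx0] at h
    have h2 : gc x ^ 2 ≤ x / Real.exp (2/(8*x+3)) := by
      rw [le_div_iff₀ hexp]; linarith
    rwa [Real.exp_neg, ← div_eq_mul_inv]
  have h2 : gc x ≤ Real.sqrt x * Real.exp (-(1/(8*x+3))) := by
    have h3 : gc x = Real.sqrt (gc x ^ 2) := (Real.sqrt_sq (gc_pos hx0).le).symm
    rw [h3]
    calc Real.sqrt (gc x ^ 2) ≤ Real.sqrt (x * Real.exp (-(2/(8*x+3)))) :=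
          Real.sqrt_le_sqrt h1
      _ = Real.sqrt x * Real.sqrt (Real.exp (-(2/(8*x+3)))) := Real.sqrt_mul hx0.le _
      _ = Real.sqrt x * Real.exp (-(1/(8*x+3))) := by
          congr 1
          rw [show -(2/(8*x+3)) = -(1/(8*x+3)) + -(1/(8*x+3)) by ring, Real.exp_add,
            show rexp (-(1/(8*x+3))) * rexp (-(1/(8*x+3))) = rexp (-(1/(8*x+3))) ^ 2 by ring,
            Real.sqrt_sq (Real.exp_pos _).le]
  rw [gc_def] at h2
  have hG : (0:ℝ) < Gamma x := Gamma_pos_of_pos hx0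
  have hs : (0:ℝ) < Real.sqrt x := Real.sqrt_pos.mpr hx0
  rw [div_le_iff₀ hG] at h2
  rw [div_le_iff₀ (by positivity)]
  calc Gamma (x+1/2) ≤ Real.sqrt x * Real.exp (-(1/(8*x+3))) * Gamma x := h2
    _ = Real.exp (-(1/(8*x+3))) * (Gamma x * Real.sqrt x) := by ring

end GRCaux

/-- Tail union bound and almost-sure collapse for the Gaussian recursive training
process: `U i` are i.i.d. `χ²_{n-1}/(n-1)` random variables, `Σ_k² = σ₀² U 1 ⋯ U k`;
then `Pr(⋃_{k ≥ m} {Σ_k > ε}) ≤ (σ₀/ε) exp(-m/(4n-1)) / (1 - exp(-1/(4n-1)))` and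
`Σ_k → 0` almost surely. -/
theorem gaussian_recursive_collapse_as
    (n : ℕ) (hn : 3 ≤ n) (σ₀ : ℝ) (hσ₀ : 0 < σ₀)
    (Ω : Type*) [MeasurableSpace Ω] (P : Measure Ω) [IsProbabilityMeasure P]
    (U : ℕ → Ω → ℝ) (hUmeas : ∀ i, Measurable (U i))
    (hUindep : iIndepFun U P)
    (hUlaw : ∀ i, Measure.map (U i) P =
      volume.withDensity (fun u => ENNReal.ofReal
        (if 0 < u then
          (((n : ℝ) - 1) / 2) ^ (((n : ℝ) - 1) / 2) / Real.Gamma (((n : ℝ) - 1) / 2) *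
            u ^ (((n : ℝ) - 1) / 2 - 1) * Real.exp (-((n : ℝ) - 1) * u / 2)
         else 0))) :
    (∀ ε : ℝ, 0 < ε → ∀ m : ℕ, 1 ≤ m →
      P (⋃ k ∈ {k : ℕ | m ≤ k},
          {ω | ε < Real.sqrt (σ₀ ^ 2 * ∏ i ∈ Finset.Icc 1 k, U i ω)})
        ≤ ENNReal.ofReal (σ₀ / ε * Real.exp (-(m : ℝ) / (4 * n - 1)) /
            (1 - Real.exp (-1 / (4 * n - 1)))))
    ∧ (∀ᵐ ω ∂P, Tendsto (fun k => Real.sqrt (σ₀ ^ 2 * ∏ i ∈ Finset.Icc 1 k, U i ω))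
        atTop (nhds 0)) := by
  classical
  have hn3 : (3:ℝ) ≤ (n:ℝ) := by exact_mod_cast hn
  set p : ℝ := ((n:ℝ)-1)/2 with hp
  have hp1 : (1:ℝ) ≤ p := by rw [hp]; linarith
  have hp0 : (0:ℝ) < p := by linarith
  have hGp : (0:ℝ) < Real.Gamma p := Real.Gamma_pos_of_pos hp0
  set r : ℝ := Real.Gamma (p + 1/2) / (Real.Gamma p * Real.sqrt p) with hr
  have hrpos : 0 < r := by
    rw [hr]
    exact div_pos (Real.Gamma_pos_of_pos (by linarith))
      (mul_pos hGp (Real.sqrt_pos.mpr hp0))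
  have hrle : r ≤ Real.exp (-1/(4*(n:ℝ)-1)) := by
    have h := GRCaux.gamma_ratio_le hp1
    rw [hr]
    have harg : -(1/(8*p+3)) = -1/(4*(n:ℝ)-1) := by rw [hp]; ring
    rwa [harg] at h
  -- measurability of sqrt→ofReal
  have hgm : Measurable fun x : ℝ => ENNReal.ofReal (Real.sqrt x) :=
    ENNReal.measurable_ofReal.comp (measurable_id.sqrt)
  -- density measurability
  have hfmeas : Measurable (fun u : ℝ => ENNReal.ofReal
      (if 0 < u then p ^ p / Real.Gamma p * u ^ (p - 1) * Real.exp (-((n : ℝ) - 1) * u / 2)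
       else 0)) := by
    apply ENNReal.measurable_ofReal.comp
    apply Measurable.ite (measurableSet_lt measurable_const measurable_id)
    · fun_prop
    · exact measurable_const
  -- the key moment computation
  have hmom : ∀ i, ∫⁻ ω, ENNReal.ofReal (Real.sqrt (U i ω)) ∂P = ENNReal.ofReal r := by
    intro i
    rw [← lintegral_map hgm (hUmeas i), hUlaw i,
      lintegral_withDensity_eq_lintegral_mul _ hfmeas hgm]
    have hsupp : (fun u : ℝ =>
        ((fun u : ℝ => ENNReal.ofReal
          (if 0 < u then p ^ p / Real.Gamma p * u ^ (p - 1) * Real.exp (-((n : ℝ) - 1) * u / 2)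
           else 0)) * fun u : ℝ => ENNReal.ofReal (Real.sqrt u)) u)
        = (Set.Ioi (0:ℝ)).indicator (fun u =>
            ENNReal.ofReal (p ^ p / Real.Gamma p *
              (u ^ (p + 1/2 - 1) * Real.exp (-(p * u))))) := by
      funext u
      by_cases hu : 0 < u
      · rw [Set.indicator_of_mem (Set.mem_Ioi.mpr hu)]
        simp only [Pi.mul_apply, if_pos hu]
        rw [← ENNReal.ofReal_mul (by positivity)]
        congr 1
        rw [Real.sqrt_eq_rpow]
        have h2 : u ^ (p - 1) * u ^ ((1:ℝ)/2) = u ^ (p + 1/2 - 1) := by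
          rw [← Real.rpow_add hu]; ring_nf
        have h3 : -((n:ℝ) - 1) * u / 2 = -(p * u) := by rw [hp]; ring
        rw [h3]
        calc p ^ p / Real.Gamma p * u ^ (p - 1) * Real.exp (-(p * u)) * u ^ ((1:ℝ)/2)
            = p ^ p / Real.Gamma p * ((u ^ (p-1) * u ^ ((1:ℝ)/2)) * Real.exp (-(p * u))) := by
              ring
          _ = p ^ p / Real.Gamma p * (u ^ (p + 1/2 - 1) * Real.exp (-(p * u))) := by rw [h2]
      · rw [Set.indicator_of_notMem (by simpa using hu)]
        simp [if_neg hu]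
    rw [hsupp, lintegral_indicator measurableSet_Ioi]
    -- Bochner integral value
    have hbi : ∫ u in Set.Ioi (0:ℝ),
        p ^ p / Real.Gamma p * (u ^ (p + 1/2 - 1) * Real.exp (-(p * u))) = r := by
      rw [integral_const_mul, Real.integral_rpow_mul_exp_neg_mul_Ioi (by linarith) hp0]
      have hsq : p ^ ((1:ℝ)/2) = Real.sqrt p := (Real.sqrt_eq_rpow p).symm
      have h1 : ((1:ℝ)/p) ^ (p + 1/2) = (p ^ (p + 1/2))⁻¹ := by
        rw [one_div, Real.inv_rpow hp0.le]
      have h2 : p ^ (p + 1/2) = p ^ p * Real.sqrt p := by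
        rw [Real.rpow_add hp0, hsq]
      rw [hr, h1, h2]
      have hpp : (0:ℝ) < p ^ p := Real.rpow_pos_of_pos hp0 p
      have hsqp : (0:ℝ) < Real.sqrt p := Real.sqrt_pos.mpr hp0
      field_simp
    have hnn : 0 ≤ᵐ[volume.restrict (Set.Ioi (0:ℝ))]
        fun u => p ^ p / Real.Gamma p * (u ^ (p + 1/2 - 1) * Real.exp (-(p * u))) := by
      filter_upwards [ae_restrict_mem measurableSet_Ioi] with u hu
      have : (0:ℝ) < u := hu
      positivity
    have hmeas2 : AEStronglyMeasurable
        (fun u : ℝ => p ^ p / Real.Gamma p * (u ^ (p + 1/2 - 1) * Real.exp (-(p * u))))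
        (volume.restrict (Set.Ioi (0:ℝ))) := by
      apply Measurable.aestronglyMeasurable
      fun_prop
    have heq := integral_eq_lintegral_of_nonneg_ae hnn hmeas2
    rw [hbi] at heq
    have hne : (∫⁻ u in Set.Ioi (0:ℝ), ENNReal.ofReal
        (p ^ p / Real.Gamma p * (u ^ (p + 1/2 - 1) * Real.exp (-(p * u))))) ≠ ⊤ := by
      intro htop
      rw [htop, ENNReal.toReal_top] at heq
      exact hrpos.ne' heq
    rw [← ENNReal.ofReal_toReal hne, ← heq]

  -- independence of the transformed variables
  set V : ℕ → Ω → ℝ≥0∞ := fun i ω => ENNReal.ofReal (Real.sqrt (U i ω)) with hV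
  have hVmeas : ∀ i, Measurable (V i) := fun i => hgm.comp (hUmeas i)
  have hVindep : iIndepFun V P :=
    hUindep.comp (fun _ => fun x : ℝ => ENNReal.ofReal (Real.sqrt x)) (fun _ => hgm)
  have hprod : ∀ s : Finset ℕ, (∫⁻ ω, ∏ i ∈ s, V i ω ∂P) = ENNReal.ofReal r ^ s.card := by
    intro s
    induction s using Finset.cons_induction with
    | empty => simp
    | cons a s ha ih =>
      have hmp : Measurable (∏ j ∈ s, V j) := by
        rw [Finset.prod_fn]
        exact s.measurable_prod fun i _ => hVmeas i
      have hind : IndepFun (∏ j ∈ s, V j) (V a) P :=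
        hVindep.indepFun_finset_prod_of_notMem hVmeas ha
      have h1 : (fun ω => ∏ i ∈ Finset.cons a s ha, V i ω)
          = fun ω => ((∏ j ∈ s, V j) * V a) ω := by
        funext ω
        simp [Finset.prod_insert ha, Finset.prod_apply, mul_comm]
      calc (∫⁻ ω, ∏ i ∈ Finset.cons a s ha, V i ω ∂P)
          = ∫⁻ ω, ((∏ j ∈ s, V j) * V a) ω ∂P := by rw [h1]
        _ = (∫⁻ ω, (∏ j ∈ s, V j) ω ∂P) * ∫⁻ ω, V a ω ∂P :=
            lintegral_mul_eq_lintegral_mul_lintegral_of_indepFun hmp (hVmeas a) hind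
        _ = ENNReal.ofReal r ^ s.card * ENNReal.ofReal r := by
            simp only [Finset.prod_apply]
            rw [ih, hmom a]
        _ = ENNReal.ofReal r ^ (Finset.cons a s ha).card := by
            rw [Finset.card_cons, pow_succ]
  -- a.s. positivity of each U i
  have hpos : ∀ᵐ ω ∂P, ∀ i, 0 < U i ω := by
    rw [ae_all_iff]
    intro i
    have hpre : P (U i ⁻¹' Set.Iic 0) = 0 := by
      rw [← Measure.map_apply (hUmeas i) measurableSet_Iic, hUlaw i,
        withDensity_apply _ measurableSet_Iic]
      have hz : ∀ᵐ u ∂(volume.restrict (Set.Iic (0:ℝ))),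
          ENNReal.ofReal
            (if 0 < u then p ^ p / Real.Gamma p * u ^ (p - 1) *
              Real.exp (-((n : ℝ) - 1) * u / 2) else 0) = 0 := by
        filter_upwards [ae_restrict_mem measurableSet_Iic] with u hu
        rw [if_neg (not_lt.mpr hu)]
        simp
      rw [lintegral_congr_ae hz, lintegral_zero]
    rw [ae_iff]
    refine measure_mono_null ?_ hpre
    intro ω hω
    simp only [Set.mem_setOf_eq, not_lt] at hω
    exact hω
  have hcard : ∀ k : ℕ, (Finset.Icc 1 k).card = k := fun k => by
    rw [Nat.card_Icc]; omega
  -- Markov bound for each k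
  have hbound : ∀ ε : ℝ, 0 < ε → ∀ k : ℕ,
      P {ω | ε < Real.sqrt (σ₀ ^ 2 * ∏ i ∈ Finset.Icc 1 k, U i ω)}
        ≤ ENNReal.ofReal (σ₀/ε) * ENNReal.ofReal r ^ k := by
    intro ε hε k
    set X : Ω → ℝ≥0∞ := fun ω => ∏ i ∈ Finset.Icc 1 k, V i ω with hX
    have hXmeas : Measurable X := by
      apply Finset.measurable_prod
      exact fun i _ => hVmeas i
    have hlint : (∫⁻ ω, X ω ∂P) = ENNReal.ofReal r ^ k := by
      have := hprod (Finset.Icc 1 k)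
      rw [hcard k] at this
      exact this
    have hsub : ∀ᵐ ω ∂P,
        ω ∈ {ω | ε < Real.sqrt (σ₀ ^ 2 * ∏ i ∈ Finset.Icc 1 k, U i ω)} →
        ω ∈ {ω | ENNReal.ofReal (ε/σ₀) ≤ X ω} := by
      filter_upwards [hpos] with ω hω hmem
      have hmem' : ε < Real.sqrt (σ₀ ^ 2 * ∏ i ∈ Finset.Icc 1 k, U i ω) := hmem
      have hUnn : ∀ i ∈ Finset.Icc 1 k, (0:ℝ) ≤ U i ω := fun i _ => (hω i).le
      have hsq : Real.sqrt (σ₀ ^ 2 * ∏ i ∈ Finset.Icc 1 k, U i ω)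
          = σ₀ * ∏ i ∈ Finset.Icc 1 k, Real.sqrt (U i ω) := by
        rw [Real.sqrt_mul (sq_nonneg σ₀), Real.sqrt_sq hσ₀.le]
        congr 1
        rw [Real.sqrt_eq_rpow, ← Real.finset_prod_rpow _ _ hUnn (1/2)]
        exact (Finset.prod_congr rfl fun i hi => (Real.sqrt_eq_rpow _)).symm
      have hXω : X ω = ENNReal.ofReal (∏ i ∈ Finset.Icc 1 k, Real.sqrt (U i ω)) := by
        rw [hX, ENNReal.ofReal_prod_of_nonneg (fun i _ => Real.sqrt_nonneg _)]
      show ENNReal.ofReal (ε/σ₀) ≤ X ω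
      rw [hXω]
      apply ENNReal.ofReal_le_ofReal
      rw [hsq] at hmem'
      rw [div_le_iff₀ hσ₀]
      nlinarith [hmem']
    have hmark := mul_meas_ge_le_lintegral (μ := P) hXmeas (ENNReal.ofReal (ε/σ₀))
    rw [hlint] at hmark
    have ha0 : ENNReal.ofReal (ε/σ₀) ≠ 0 := by
      simp only [ne_eq, ENNReal.ofReal_eq_zero, not_le]
      positivity
    have hatop : ENNReal.ofReal (ε/σ₀) ≠ ⊤ := ENNReal.ofReal_ne_top
    calc P {ω | ε < Real.sqrt (σ₀ ^ 2 * ∏ i ∈ Finset.Icc 1 k, U i ω)}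
        ≤ P {ω | ENNReal.ofReal (ε/σ₀) ≤ X ω} := measure_mono_ae hsub
      _ ≤ (ENNReal.ofReal (ε/σ₀))⁻¹ * ENNReal.ofReal r ^ k := by
          have h2 := mul_le_mul_right hmark (ENNReal.ofReal (ε/σ₀))⁻¹
          rwa [← mul_assoc, ENNReal.inv_mul_cancel ha0 hatop, one_mul] at h2
      _ = ENNReal.ofReal (σ₀/ε) * ENNReal.ofReal r ^ k := by
          rw [← ENNReal.ofReal_inv_of_pos (div_pos hε hσ₀), inv_div]
  -- geometric tail bound
  set t : ℝ := Real.exp (-1/(4*(n:ℝ)-1)) with ht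
  have h4n : (0:ℝ) < 4*(n:ℝ)-1 := by linarith
  have ht0 : 0 < t := Real.exp_pos _
  have ht1 : t < 1 := by
    rw [ht, Real.exp_lt_one_iff]
    rw [div_neg_iff]
    right
    constructor <;> linarith
  have key : ∀ ε : ℝ, 0 < ε → ∀ m : ℕ,
      P (⋃ k ∈ {k : ℕ | m ≤ k},
          {ω | ε < Real.sqrt (σ₀ ^ 2 * ∏ i ∈ Finset.Icc 1 k, U i ω)})
        ≤ ENNReal.ofReal (σ₀ / ε * t ^ m / (1 - t)) := by
    intro ε hε m
    have hUeq : (⋃ k ∈ {k : ℕ | m ≤ k},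
          {ω | ε < Real.sqrt (σ₀ ^ 2 * ∏ i ∈ Finset.Icc 1 k, U i ω)})
        = ⋃ j : ℕ, {ω | ε < Real.sqrt (σ₀ ^ 2 * ∏ i ∈ Finset.Icc 1 (m+j), U i ω)} := by
      ext ω
      simp only [Set.mem_iUnion, Set.mem_setOf_eq]
      constructor
      · rintro ⟨k, hk, hω⟩
        exact ⟨k - m, by rwa [Nat.add_sub_cancel' hk]⟩
      · rintro ⟨j, hω⟩
        exact ⟨m+j, Nat.le_add_right m j, hω⟩
    rw [hUeq]
    calc P (⋃ j : ℕ, {ω | ε < Real.sqrt (σ₀ ^ 2 * ∏ i ∈ Finset.Icc 1 (m+j), U i ω)})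
        ≤ ∑' j : ℕ, P {ω | ε < Real.sqrt (σ₀ ^ 2 * ∏ i ∈ Finset.Icc 1 (m+j), U i ω)} :=
          measure_iUnion_le _
      _ ≤ ∑' j : ℕ, ENNReal.ofReal (σ₀/ε) * ENNReal.ofReal t ^ (m+j) := by
          apply ENNReal.tsum_le_tsum
          intro j
          refine le_trans (hbound ε hε (m+j)) ?_
          gcongr
      _ = ENNReal.ofReal (σ₀/ε) * ENNReal.ofReal t ^ m * ∑' j : ℕ, ENNReal.ofReal t ^ j := by
          simp_rw [pow_add, ← mul_assoc]
          rw [ENNReal.tsum_mul_left]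
      _ = ENNReal.ofReal (σ₀/ε) * ENNReal.ofReal t ^ m * (1 - ENNReal.ofReal t)⁻¹ := by
          rw [ENNReal.tsum_geometric]
      _ = ENNReal.ofReal (σ₀ / ε * t ^ m / (1 - t)) := by
          rw [← ENNReal.ofReal_pow ht0.le, ← ENNReal.ofReal_one,
            ← ENNReal.ofReal_sub _ ht0.le,
            ← ENNReal.ofReal_inv_of_pos (by linarith : (0:ℝ) < 1 - t),
            ← ENNReal.ofReal_mul (by positivity),
            ← ENNReal.ofReal_mul (by positivity), ← div_eq_mul_inv]
  constructor
  · intro ε hε m _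
    refine le_trans (key ε hε m) (le_of_eq ?_)
    congr 2
    rw [show -(m:ℝ)/(4*(n:ℝ)-1) = (m:ℕ) * (-1/(4*(n:ℝ)-1)) by push_cast; ring,
      Real.exp_nat_mul]
  · have haeconv : ∀ᵐ ω ∂P, ∀ j : ℕ, ∃ m : ℕ, ∀ k, m ≤ k →
        Real.sqrt (σ₀^2 * ∏ i ∈ Finset.Icc 1 k, U i ω) ≤ 1/((j:ℝ)+1) := by
      rw [ae_all_iff]
      intro j
      have hεj0 : (0:ℝ) < 1/((j:ℝ)+1) := by positivity
      have hB : P (⋂ m : ℕ, ⋃ k ∈ {k : ℕ | m ≤ k},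
          {ω | 1/((j:ℝ)+1) < Real.sqrt (σ₀ ^ 2 * ∏ i ∈ Finset.Icc 1 k, U i ω)}) = 0 := by
        have hle : ∀ m : ℕ,
            P (⋂ m : ℕ, ⋃ k ∈ {k : ℕ | m ≤ k},
              {ω | 1/((j:ℝ)+1) < Real.sqrt (σ₀ ^ 2 * ∏ i ∈ Finset.Icc 1 k, U i ω)})
            ≤ ENNReal.ofReal (σ₀ / (1/((j:ℝ)+1)) * t ^ m / (1 - t)) := fun m =>
          le_trans (measure_mono (Set.iInter_subset _ m)) (key _ hεj0 m)
        have htend : Tendsto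
            (fun m : ℕ => ENNReal.ofReal (σ₀ / (1/((j:ℝ)+1)) * t ^ m / (1 - t)))
            atTop (nhds 0) := by
          have h1 : Tendsto (fun m : ℕ => σ₀ / (1/((j:ℝ)+1)) * t ^ m / (1 - t))
              atTop (nhds 0) := by
            have h2 := tendsto_pow_atTop_nhds_zero_of_lt_one ht0.le ht1
            have h3 := (h2.const_mul (σ₀ / (1/((j:ℝ)+1)))).div_const (1 - t)
            simpa using h3
          have h4 := (ENNReal.continuous_ofReal.tendsto 0).comp h1
          simpa [Function.comp_def] using h4
        exact le_antisymm (ge_of_tendsto' htend hle) zero_le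
      have h2 := measure_eq_zero_iff_ae_notMem.mp hB
      filter_upwards [h2] with ω hω
      simp only [Set.mem_iInter, Set.mem_iUnion, Set.mem_setOf_eq, not_forall,
        not_exists, not_lt] at hω
      obtain ⟨m, hm⟩ := hω
      exact ⟨m, fun k hk => hm k hk⟩
    filter_upwards [haeconv] with ω hω
    rw [Metric.tendsto_atTop]
    intro δ hδ
    obtain ⟨j, hj⟩ := exists_nat_one_div_lt hδ
    obtain ⟨m, hm⟩ := hω j
    refine ⟨m, fun k hk => ?_⟩
    rw [Real.dist_eq, sub_zero, abs_of_nonneg (Real.sqrt_nonneg _)]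
    exact lt_of_le_of_lt (hm k hk) hj
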